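/- Let n > 1 be an integer and let u, v be integers with gcd(u, n) = gcd(v, n) = 1, and let a, b be integers. Then the elements α and β of B(ℤ_n) defined by α(x) = u·x + a and β(x) = v·x + b are conjugate in the group B(ℤ_n) if and only if u ≡ v (mod n) and gcd(u - 1, a, n) = gcd(u - 1, b, n), where gcd(−, −, −) denotes the greatest common divisor of three integers. -/

import Mathlib

open Polynomial

/-- The group `B_x(R)` of `R`-automorphisms of `R[x]` of basic form
`x ↦ u·x + a` with `u` a unit of `R` and `a ∈ R`. -/
def Bx (R : Type*) [CommRing R] : Subgroup (R[X] ≃ₐ[R] R[X]) where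
  carrier := {σ | ∃ u : Rˣ, ∃ a : R, σ X = C (u : R) * X + C a}
  one_mem' := ⟨1, 0, by simp⟩
  mul_mem' := by
    rintro σ τ ⟨u, a, hu⟩ ⟨v, b, hv⟩
    refine ⟨u * v, (v : R) * a + b, ?_⟩
    show σ (τ X) = _
    rw [hv, map_add, map_mul, ← Polynomial.algebraMap_eq, AlgEquiv.commutes,
      AlgEquiv.commutes, Polynomial.algebraMap_eq, hu]
    push_cast
    simp only [C_mul, C_add]
    ring
  inv_mem' := by
    rintro σ ⟨u, a, hu⟩
    refine ⟨u⁻¹, -(((u⁻¹ : Rˣ) : R) * a), ?_⟩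
    show σ.symm X = _
    have h : σ.symm (σ X) = X := σ.symm_apply_apply X
    rw [hu, map_add, map_mul, ← Polynomial.algebraMap_eq, AlgEquiv.commutes,
      AlgEquiv.commutes, Polynomial.algebraMap_eq] at h
    have key : C ((u⁻¹ : Rˣ) : R) * C ((u : Rˣ) : R) = 1 := by
      rw [← C_mul]; simp
    rw [C_neg, C_mul]
    linear_combination C ((u⁻¹ : Rˣ) : R) * h - σ.symm X * key



lemma polyAlgEquiv_ext {R : Type*} [CommSemiring R] {f g : R[X] ≃ₐ[R] R[X]}
    (h : f X = g X) : f = g := by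
  have h2 : (f : R[X] →ₐ[R] R[X]) = (g : R[X] →ₐ[R] R[X]) := Polynomial.algHom_ext h
  exact AlgEquiv.ext fun p => DFunLike.congr_fun h2 p

lemma linear_eq' {R : Type*} [CommSemiring R] {p q r s : R}
    (h : C p * X + C q = C r * X + C s) : p = r ∧ q = s := by
  constructor
  · have := congrArg (fun f => Polynomial.coeff f 1) h
    simpa using this
  · have := congrArg (fun f => Polynomial.coeff f 0) h
    simpa using this



lemma gcd_eq_of_dvd_sub {d : ℕ} {x y : ℤ} (h : (d:ℤ) ∣ x - y) : Int.gcd x d = Int.gcd y d := by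
  apply Nat.dvd_antisymm
  · rw [← Int.natCast_dvd_natCast]
    apply Int.dvd_coe_gcd _ (Int.gcd_dvd_right _ _)
    have h1 : (Int.gcd x d : ℤ) ∣ x := (Int.gcd_dvd_left _ _)
    have h2 : (Int.gcd x d : ℤ) ∣ x - y := dvd_trans (Int.gcd_dvd_right _ _) h
    simpa using dvd_sub h1 h2
  · rw [← Int.natCast_dvd_natCast]
    apply Int.dvd_coe_gcd _ (Int.gcd_dvd_right _ _)
    have h1 : (Int.gcd y d : ℤ) ∣ y := (Int.gcd_dvd_left _ _)
    have h2 : (Int.gcd y d : ℤ) ∣ x - y := dvd_trans (Int.gcd_dvd_right _ _) h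
    simpa using dvd_add h1 h2

lemma gcd_mul_left_cancel' {w d : ℤ} (a : ℤ) (h : Int.gcd w d = 1) :
    Int.gcd (w * a) d = Int.gcd a d := by
  unfold Int.gcd at *
  rw [Int.natAbs_mul]
  exact Nat.Coprime.gcd_mul_left_cancel _ h

lemma isUnit_zmod_of_gcd_eq_one {m : ℕ} {x : ℤ} (h : Int.gcd x m = 1) :
    IsUnit ((x : ZMod m)) := by
  have h1 : IsCoprime x (m:ℤ) := Int.isCoprime_iff_gcd_eq_one.mpr h
  have h2 := h1.map (Int.castRingHom (ZMod m))
  simp only [Int.coe_castRingHom] at h2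
  have h0 : (((m:ℤ) : ZMod m)) = 0 := by
    rw [ZMod.intCast_zmod_eq_zero_iff_dvd]
  rw [h0] at h2
  exact isCoprime_zero_right.mp h2

lemma key_arith (n : ℕ) (hn : 0 < n) (u a b : ℤ) :
    (∃ w c : ℤ, Int.gcd w n = 1 ∧ (n:ℤ) ∣ b - (w * a + (1 - u) * c)) ↔
      Int.gcd (Int.gcd (u - 1) a) n = Int.gcd (Int.gcd (u - 1) b) n := by
  have hn' : (n:ℤ) ≠ 0 := by exact_mod_cast hn.ne'
  set d : ℕ := Int.gcd (u - 1) n with hd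
  have hgoal1 : Int.gcd (Int.gcd (u - 1) a) n = Int.gcd a d := by
    rw [Int.gcd_comm (u-1) a, Int.gcd_assoc, hd]
  have hgoal2 : Int.gcd (Int.gcd (u - 1) b) n = Int.gcd b d := by
    rw [Int.gcd_comm (u-1) b, Int.gcd_assoc, hd]
  have hdn : (d:ℤ) ∣ (n:ℤ) := (Int.gcd_dvd_right _ _)
  have hdu : (d:ℤ) ∣ (u - 1) := (Int.gcd_dvd_left _ _)
  rw [hgoal1, hgoal2]
  constructor
  · rintro ⟨w, c, hw, hdvd⟩
    have h1 : (d:ℤ) ∣ b - w * a := by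
      have heq : b - w * a = (b - (w * a + (1 - u) * c)) + (-(u - 1)) * c := by ring
      rw [heq]
      exact dvd_add (dvd_trans hdn hdvd) (Dvd.dvd.mul_right (dvd_neg.mpr hdu) c)
    have hwd : Int.gcd w d = 1 :=
      Nat.Coprime.coprime_dvd_right (Int.natCast_dvd_natCast.mp hdn) hw
    rw [← gcd_mul_left_cancel' a hwd]
    exact (gcd_eq_of_dvd_sub h1).symm
  · intro hgcd
    set e : ℕ := Int.gcd a d with he
    have hdpos : 0 < d := Int.gcd_pos_of_ne_zero_right _ hn'
    have hd'' : (d:ℤ) ≠ 0 := by exact_mod_cast hdpos.ne'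
    have hepos : 0 < e := Int.gcd_pos_of_ne_zero_right _ hd''
    have hea : (e:ℤ) ∣ a := (Int.gcd_dvd_left _ _)
    have heb : (e:ℤ) ∣ b := by rw [hgcd]; exact (Int.gcd_dvd_left _ _)
    have hed : e ∣ d := Int.natCast_dvd_natCast.mp (Int.gcd_dvd_right _ _)
    obtain ⟨a₀, ha₀⟩ := hea
    obtain ⟨b₀, hb₀⟩ := heb
    obtain ⟨d₀, hd₀⟩ := hed
    have hgcda : Int.gcd a (d:ℤ) = e * Int.gcd a₀ d₀ := by
      rw [ha₀, hd₀]; push_cast; rw [Int.gcd_mul_left]; simp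
    have hgcdb : Int.gcd b (d:ℤ) = e * Int.gcd b₀ d₀ := by
      rw [hb₀, hd₀]; push_cast; rw [Int.gcd_mul_left]; simp
    have hcopa : Int.gcd a₀ (d₀:ℤ) = 1 := by
      have hh : e * Int.gcd a₀ (d₀:ℤ) = e := by rw [← hgcda]
      exact (Nat.mul_eq_left hepos.ne').mp hh
    have hcopb : Int.gcd b₀ (d₀:ℤ) = 1 := by
      have hh : e * Int.gcd b₀ (d₀:ℤ) = e := by rw [← hgcdb]; exact hgcd.symm
      exact (Nat.mul_eq_left hepos.ne').mp hh
    have hd₀n : d₀ ∣ n := dvd_trans ⟨e, by rw [hd₀]; ring⟩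
      (Int.natCast_dvd_natCast.mp hdn)
    haveI : NeZero n := ⟨hn.ne'⟩
    obtain ⟨ua, hua⟩ := isUnit_zmod_of_gcd_eq_one hcopa
    obtain ⟨ub, hub⟩ := isUnit_zmod_of_gcd_eq_one hcopb
    obtain ⟨W, hW⟩ := ZMod.unitsMap_surjective (n := d₀) (m := n) hd₀n
      (ub * ua⁻¹)
    set w : ℤ := ((W : ZMod n).val : ℤ) with hwdef
    have hwcop : Int.gcd w n = 1 := by
      have := ZMod.val_coe_unit_coprime W
      rw [hwdef]
      exact_mod_cast this
    have hcast : ((w : ZMod d₀)) = ((ub * ua⁻¹ : (ZMod d₀)ˣ) : ZMod d₀) := by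
      rw [← hW, hwdef]
      push_cast
      rw [ZMod.natCast_val]
      rfl
    have hmul : ((w : ZMod d₀)) * (a₀ : ZMod d₀) = (b₀ : ZMod d₀) := by
      rw [hcast, Units.val_mul, mul_assoc, ← hua, ← Units.val_mul, inv_mul_cancel,
        Units.val_one, mul_one, hub]
    have hdvd₀ : (d₀:ℤ) ∣ w * a₀ - b₀ := by
      rw [← ZMod.intCast_zmod_eq_zero_iff_dvd]
      push_cast
      rw [hmul, sub_self]
    have hdvd : (d:ℤ) ∣ w * a - b := by
      rw [ha₀, hb₀, hd₀]
      have heq : w * ((e:ℤ) * a₀) - (e:ℤ) * b₀ = (e:ℤ) * (w * a₀ - b₀) := by ring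
      rw [heq]
      push_cast
      exact mul_dvd_mul_left _ hdvd₀
    obtain ⟨t, ht⟩ := hdvd
    have hbez : (d:ℤ) = (u-1) * Int.gcdA (u-1) n + n * Int.gcdB (u-1) n := Int.gcd_eq_gcd_ab _ _
    refine ⟨w, Int.gcdA (u-1) n * t, hwcop, ⟨-(Int.gcdB (u-1) n * t), ?_⟩⟩
    linear_combination (-1) * ht + (-t) * hbez

lemma zmod_exists_iff_int (n : ℕ) (hn : 1 < n) (u a b : ℤ) :
    (∃ w : (ZMod n)ˣ, ∃ c : ZMod n,
        (b : ZMod n) = ((w : ZMod n)) * (a : ZMod n) + (1 - (u : ZMod n)) * c) ↔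
      (∃ w c : ℤ, Int.gcd w n = 1 ∧ (n:ℤ) ∣ b - (w * a + (1 - u) * c)) := by
  haveI : NeZero n := ⟨by omega⟩
  constructor
  · rintro ⟨w, c, hbc⟩
    refine ⟨((w : ZMod n).val : ℤ), ((c.val : ℤ)), ?_, ?_⟩
    · exact_mod_cast ZMod.val_coe_unit_coprime w
    · have hcast : ((b : ℤ) : ZMod n)
          = ((((w : ZMod n).val : ℤ) * a + (1 - u) * (c.val : ℤ) : ℤ) : ZMod n) := by
        push_cast
        rw [ZMod.natCast_val, ZMod.natCast_val, ZMod.cast_id, ZMod.cast_id]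
        exact hbc
      have hmod := (ZMod.intCast_eq_intCast_iff _ _ _).mp hcast
      exact Int.ModEq.dvd hmod.symm
  · rintro ⟨w, c, hw, hdvd⟩
    obtain ⟨W, hW⟩ := isUnit_zmod_of_gcd_eq_one hw
    refine ⟨W, (c : ZMod n), ?_⟩
    have hmod : ((w * a + (1 - u) * c : ℤ) : ZMod n) = ((b : ℤ) : ZMod n) :=
      (ZMod.intCast_eq_intCast_iff _ _ _).mpr (Int.modEq_iff_dvd.mpr hdvd)
    push_cast at hmod
    rw [hW]
    exact hmod.symm

lemma conj_iff {R : Type*} [CommRing R] (u v a b : R)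
    (α β : R[X] ≃ₐ[R] R[X]) (hα : α X = C u * X + C a) (hβ : β X = C v * X + C b) :
    (∃ g ∈ Bx R, β = g⁻¹ * α * g) ↔
      (v = u ∧ ∃ w : Rˣ, ∃ c : R, b = w * a + (1 - u) * c) := by
  constructor
  · rintro ⟨g, ⟨w, c, hg⟩, heq⟩
    have hmul : g * β = α * g := by rw [heq]; group
    have hX := DFunLike.congr_fun hmul X
    rw [AlgEquiv.mul_apply, AlgEquiv.mul_apply, hβ, hg] at hX
    have gC : ∀ r : R, g (C r) = C r := fun r => by
      rw [← Polynomial.algebraMap_eq]; exact g.commutes r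
    have αC : ∀ r : R, α (C r) = C r := fun r => by
      rw [← Polynomial.algebraMap_eq]; exact α.commutes r
    rw [map_add, map_mul, gC, gC, hg, map_add, map_mul, αC, αC, hα] at hX
    have hX' : C (v * (w:R)) * X + C (v * c + b) = C ((w:R) * u) * X + C ((w:R) * a + c) := by
      simp only [C_mul, C_add]
      linear_combination hX
    obtain ⟨h1, h0⟩ := linear_eq' hX'
    have huv : v = u := (Units.isUnit w).mul_right_cancel (h1.trans (mul_comm _ _))
    refine ⟨huv, w, c, ?_⟩
    rw [huv] at h0
    linear_combination h0
  · rintro ⟨huv, w, c, hb⟩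
    have hC : (C ((w : R)) * C ((w⁻¹ : Rˣ) : R) : R[X]) = 1 := by
      rw [← C_mul, Units.mul_inv, map_one]
    have hC' : (C ((w⁻¹ : Rˣ) : R) * C ((w : R)) : R[X]) = 1 := by
      rw [← C_mul, Units.inv_mul, map_one]
    set p : R[X] := C (w : R) * X + C c with hp
    set q : R[X] := C ((w⁻¹ : Rˣ) : R) * X - C ((w⁻¹ : Rˣ) : R) * C c with hq
    have hpq : p.comp q = X := by
      simp only [hp, hq, add_comp, mul_comp, sub_comp, C_comp, X_comp]
      linear_combination (X - C c) * hC
    have hqp : q.comp p = X := by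
      simp only [hp, hq, add_comp, mul_comp, sub_comp, C_comp, X_comp]
      linear_combination X * hC'
    set g := Polynomial.algEquivOfCompEqX p q hpq hqp with hgdef
    have hgX : g X = p := by
      rw [hgdef]
      simp [Polynomial.algEquivOfCompEqX_apply]
    have hgsymmX : g.symm X = q := by
      rw [hgdef, Polynomial.algEquivOfCompEqX_symm]
      simp [Polynomial.algEquivOfCompEqX_apply]
    refine ⟨g, ⟨w, c, by rw [hgX]⟩, ?_⟩
    apply polyAlgEquiv_ext
    have gC : ∀ r : R, g.symm (C r) = C r := fun r => by
      rw [← Polynomial.algebraMap_eq]; exact g.symm.commutes r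
    have αC : ∀ r : R, α (C r) = C r := fun r => by
      rw [← Polynomial.algebraMap_eq]; exact α.commutes r
    have hinv : (g⁻¹ : R[X] ≃ₐ[R] R[X]) = g.symm := rfl
    rw [hβ, AlgEquiv.mul_apply, AlgEquiv.mul_apply, hgX, hinv, hp,
      map_add, map_mul, αC, αC, hα]
    simp only [map_add, map_mul, gC, hgsymmX, hq]
    have hCv : C v = C u := congrArg C huv
    have hCb : C b = C ((w:R)) * C a + (1 - C u) * C c := by
      rw [hb, C_add, C_mul, C_mul, C_sub, C_1]
    linear_combination X * hCv + hCb - C u * (X - C c) * hC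

/-- Theorem: the elements `α(x) = u·x + a` and `β(x) = v·x + b` of `B(ℤ_n)` are conjugate
iff `u ≡ v (mod n)` and `gcd(u-1, a, n) = gcd(u-1, b, n)`. -/
theorem zmodn_conjugate_iff (n : ℕ) (hn : 1 < n) (u v a b : ℤ)
    (hu : Int.gcd u n = 1) (hv : Int.gcd v n = 1)
    (α β : (ZMod n)[X] ≃ₐ[ZMod n] (ZMod n)[X])
    (hα : α X = C ((u : ZMod n)) * X + C ((a : ZMod n)))
    (hβ : β X = C ((v : ZMod n)) * X + C ((b : ZMod n))) :
    (∃ g ∈ Bx (ZMod n), β = g⁻¹ * α * g) ↔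
      (u ≡ v [ZMOD (n : ℤ)] ∧
        Int.gcd (Int.gcd (u - 1) a) n = Int.gcd (Int.gcd (u - 1) b) n) := by
  haveI : NeZero n := ⟨by omega⟩
  rw [conj_iff ((u : ZMod n)) ((v : ZMod n)) ((a : ZMod n)) ((b : ZMod n)) α β hα hβ,
    zmod_exists_iff_int n hn u a b, key_arith n (by omega) u a b]
  constructor
  · rintro ⟨h1, h2⟩
    exact ⟨(ZMod.intCast_eq_intCast_iff _ _ _).mp h1.symm, h2⟩
  · rintro ⟨h1, h2⟩
    exact ⟨((ZMod.intCast_eq_intCast_iff _ _ _).mpr h1).symm, h2⟩
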